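/- Let {q_n} be the Fibonacci Quilt sequence and let λ₁ be the unique real root of x³ − x − 1 = 0 (λ₁ ≈ 1.32472). Then there exists a constant α₁ > 0 (α₁ ≈ 1.26724) such that q_n / λ₁^n converges to α₁ as n → ∞. -/

import Mathlib

set_option maxRecDepth 100000

open scoped BigOperators

/-- A finite set of indices is FQ-legal: distinct indices never differ by 1, 3 or 4,
and the set does not contain both 1 and 3. -/
def FQLegal (L : Finset ℕ) : Prop :=
  (∀ i ∈ L, ∀ j ∈ L, i ≠ j →
    max i j - min i j ≠ 1 ∧ max i j - min i j ≠ 3 ∧ max i j - min i j ≠ 4) ∧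
  ¬ (1 ∈ L ∧ 3 ∈ L)

/-- `m` has an FQ-legal decomposition using only `q_1, …, q_{i-1}`. -/
def FQRepr (q : ℕ → ℕ) (i m : ℕ) : Prop :=
  ∃ L : Finset ℕ, (∀ j ∈ L, 1 ≤ j ∧ j < i) ∧ FQLegal L ∧ (∑ j ∈ L, q j) = m

/-- `q` (1-indexed) is the Fibonacci Quilt sequence: `q 1 = 1` and for `i ≥ 2`,
`q i` is the smallest positive integer having no FQ-legal decomposition using
`{q_1, …, q_{i-1}}`. -/
def IsFQSeq (q : ℕ → ℕ) : Prop :=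
  q 1 = 1 ∧ ∀ i, 2 ≤ i → IsLeast {m : ℕ | 0 < m ∧ ¬ FQRepr q i m} (q i)

instance : DecidablePred FQLegal := fun L => by unfold FQLegal; infer_instance

def Q : ℕ → ℕ
  | 0 => 0 | 1 => 1 | 2 => 2 | 3 => 3 | 4 => 4
  | (n+5) => Q (n+3) + Q (n+2)

lemma Q5 (n : ℕ) : Q (n+5) = Q (n+3) + Q (n+2) := rfl

lemma Q_succ_lt (n : ℕ) : Q n < Q (n+1) := by
  induction n using Nat.strong_induction_on with
  | _ n ih =>
    match n with
    | 0 => decide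
    | 1 => decide
    | 2 => decide
    | 3 => decide
    | 4 => decide
    | (m+5) =>
      have h1 : Q (m+3) < Q (m+4) := ih (m+3) (by omega)
      have h2 : Q (m+2) < Q (m+3) := ih (m+2) (by omega)
      have e1 : Q (m+5) = Q (m+3) + Q (m+2) := rfl
      have e2 : Q (m+6) = Q (m+4) + Q (m+3) := rfl
      show Q (m+5) < Q (m+6)
      omega

lemma Q_mono {a b : ℕ} (h : a ≤ b) : Q a ≤ Q b := by
  induction b with
  | zero => simp_all
  | succ b ih =>
    rcases Nat.lt_or_ge a (b+1) with h'|h'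
    · exact le_trans (ih (by omega)) (Q_succ_lt b).le
    · have : a = b + 1 := by omega
      simp [this]

lemma Q_smono {a b : ℕ} (h : a < b) : Q a < Q b :=
  lt_of_lt_of_le (Q_succ_lt a) (Q_mono h)

lemma Q_pos {n : ℕ} (h : 1 ≤ n) : 0 < Q n := by
  have : Q 0 < Q n := Q_smono h
  exact (Nat.zero_le _).trans_lt this

/-- +4-step identity: Q (n+7) = Q (n+6) + Q (n+2). -/
lemma Q4 (n : ℕ) : Q (n+7) = Q (n+6) + Q (n+2) := by
  have a : Q (n+7) = Q (n+5) + Q (n+4) := rfl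
  have b : Q (n+6) = Q (n+4) + Q (n+3) := rfl
  have c : Q (n+5) = Q (n+3) + Q (n+2) := rfl
  omega

lemma legal_subset {L L' : Finset ℕ} (h : FQLegal L) (hs : L' ⊆ L) : FQLegal L' :=
  ⟨fun i hi j hj hij => h.1 i (hs hi) j (hs hj) hij,
   fun ⟨h1, h3⟩ => h.2 ⟨hs h1, hs h3⟩⟩

lemma legal_gap {L : Finset ℕ} (hL : FQLegal L) {a b : ℕ} (ha : a ∈ L) (hb : b ∈ L)
    (hab : b < a) : a - b ≠ 1 ∧ a - b ≠ 3 ∧ a - b ≠ 4 := by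
  have := hL.1 a ha b hb (by omega)
  rwa [Nat.max_eq_left hab.le, Nat.min_eq_right hab.le] at this

lemma bounded_of_powerset {P : Finset ℕ → Prop} {n : ℕ}
    (h : ∀ L ∈ (Finset.Icc 1 n).powerset, FQLegal L → P L) :
    ∀ L : Finset ℕ, FQLegal L → (∀ j ∈ L, 1 ≤ j ∧ j ≤ n) → P L := by
  intro L hL hb
  exact h L (Finset.mem_powerset.2 (fun x hx => Finset.mem_Icc.2 (hb x hx))) hL

/-- two-erase bound helper: if m+8 and m+6 are in a legal L ⊆ [1,m+8],
    all other elements are ≤ m+1. -/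
lemma double_erase_bound {m : ℕ} {L : Finset ℕ} (hL : FQLegal L)
    (hn : m+8 ∈ L) (h2 : m+6 ∈ L) :
    ∀ j ∈ (L.erase (m+8)).erase (m+6), j ∈ L ∧ (j ≤ m+8 → j ≤ m + 1) := by
  intro j hj
  have hj2 : j ≠ m+6 := (Finset.mem_erase.1 hj).1
  have hjk : j ∈ L.erase (m+8) := (Finset.mem_erase.1 hj).2
  have hjne : j ≠ m+8 := (Finset.mem_erase.1 hjk).1
  have hjL : j ∈ L := (Finset.mem_erase.1 hjk).2
  refine ⟨hjL, fun hub => ?_⟩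
  rcases Nat.lt_or_ge j (m+6) with h|h
  · have g2 := legal_gap hL h2 hjL h
    rcases Nat.lt_or_ge j (m+8) with h'|h'
    · have g1 := legal_gap hL hn hjL h'
      omega
    · omega
  · rcases Nat.lt_or_ge j (m+8) with h'|h'
    · have g1 := legal_gap hL hn hjL h'
      have g2 := legal_gap hL hjL h2 (by omega)
      omega
    · omega

lemma single_erase_bound {m : ℕ} {L : Finset ℕ} (hL : FQLegal L)
    (hn : m+8 ∈ L) (h2 : m+6 ∉ L) :
    ∀ j ∈ L.erase (m+8), j ∈ L ∧ (j ≤ m+8 → j ≤ m + 3) := by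
  intro j hj
  have hjne : j ≠ m+8 := (Finset.mem_erase.1 hj).1
  have hjL : j ∈ L := (Finset.mem_erase.1 hj).2
  refine ⟨hjL, fun hle => ?_⟩
  have g1 := legal_gap hL hn hjL (by omega)
  have : j ≠ m+6 := fun h => h2 (h ▸ hjL)
  omega

/-- Size bound: any legal sum with indices in [1,k] is < Q (k+3). -/
lemma Msize : ∀ k : ℕ, ∀ L : Finset ℕ, FQLegal L → (∀ j ∈ L, 1 ≤ j ∧ j ≤ k) →
    (∑ j ∈ L, Q j) < Q (k+3) := by
  intro k
  induction k using Nat.strong_induction_on with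
  | _ k ih =>
    match k with
    | 0 => exact bounded_of_powerset (by decide)
    | 1 => exact bounded_of_powerset (by decide)
    | 2 => exact bounded_of_powerset (by decide)
    | 3 => exact bounded_of_powerset (by decide)
    | 4 => exact bounded_of_powerset (by decide)
    | 5 => exact bounded_of_powerset (by decide)
    | 6 => exact bounded_of_powerset (by decide)
    | 7 => exact bounded_of_powerset (by decide)
    | (m+8) =>
      intro L hL hb
      show (∑ j ∈ L, Q j) < Q (m+11)
      by_cases hn : m+8 ∈ L
      · have hsum : ∑ j ∈ L.erase (m+8), Q j + Q (m+8) = ∑ j ∈ L, Q j :=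
          Finset.sum_erase_add L Q hn
        by_cases h2 : m+6 ∈ L
        · have h2' : m+6 ∈ L.erase (m+8) := Finset.mem_erase.2 ⟨by omega, h2⟩
          have hsum2 : ∑ j ∈ (L.erase (m+8)).erase (m+6), Q j + Q (m+6)
              = ∑ j ∈ L.erase (m+8), Q j := Finset.sum_erase_add _ Q h2'
          have hbb : ∀ j ∈ (L.erase (m+8)).erase (m+6), 1 ≤ j ∧ j ≤ m + 1 := by
            intro j hj
            obtain ⟨hjL, hub⟩ := double_erase_bound hL hn h2 j hj
            have := hb j hjL
            exact ⟨this.1, hub this.2⟩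
          have hS : (∑ j ∈ (L.erase (m+8)).erase (m+6), Q j) < Q (m+4) :=
            ih (m+1) (by omega) _ (legal_subset hL (fun x hx =>
              Finset.mem_of_mem_erase (Finset.mem_of_mem_erase hx))) hbb
          -- Q(m+11) = Q(m+9) + Q(m+8), Q(m+9) = Q(m+7)+Q(m+6), Q(m+4) ≤ Q(m+7)
          have e1 : Q (m+11) = Q (m+9) + Q (m+8) := Q5 (m+6)
          have e2 : Q (m+9) = Q (m+7) + Q (m+6) := Q5 (m+4)
          have e3 : Q (m+4) ≤ Q (m+7) := Q_mono (by omega)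
          omega
        · have hbb : ∀ j ∈ L.erase (m+8), 1 ≤ j ∧ j ≤ m + 3 := by
            intro j hj
            obtain ⟨hjL, hub⟩ := single_erase_bound hL hn h2 j hj
            have := hb j hjL
            exact ⟨this.1, hub this.2⟩
          have hS : (∑ j ∈ L.erase (m+8), Q j) < Q (m+6) :=
            ih (m+3) (by omega) _
              (legal_subset hL (Finset.erase_subset _ _)) hbb
          have e1 : Q (m+11) = Q (m+9) + Q (m+8) := Q5 (m+6)
          have e3 : Q (m+6) ≤ Q (m+9) := Q_mono (by omega)
          omega
      · have hbb : ∀ j ∈ L, 1 ≤ j ∧ j ≤ m + 7 := by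
          intro j hj
          have h1 := hb j hj
          have : j ≠ m+8 := fun h => hn (h ▸ hj)
          omega
        have hS : (∑ j ∈ L, Q j) < Q (m+10) := ih (m+7) (by omega) L hL hbb
        have : Q (m+10) ≤ Q (m+11) := Q_mono (by omega)
        omega

/-- Main lemma: no legal sum with indices in [1,n] equals Q(n+1) or Q(n+2). -/
lemma keyP : ∀ n : ℕ, ∀ L : Finset ℕ, FQLegal L → (∀ j ∈ L, 1 ≤ j ∧ j ≤ n) →
    (∑ j ∈ L, Q j) ≠ Q (n+1) ∧ (∑ j ∈ L, Q j) ≠ Q (n+2) := by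
  intro n
  induction n using Nat.strong_induction_on with
  | _ n ih =>
    match n with
    | 0 => exact bounded_of_powerset (by decide)
    | 1 => exact bounded_of_powerset (by decide)
    | 2 => exact bounded_of_powerset (by decide)
    | 3 => exact bounded_of_powerset (by decide)
    | 4 => exact bounded_of_powerset (by decide)
    | 5 => exact bounded_of_powerset (by decide)
    | 6 => exact bounded_of_powerset (by decide)
    | 7 => exact bounded_of_powerset (by decide)
    | (m+8) =>
      intro L hL hb
      show (∑ j ∈ L, Q j) ≠ Q (m+9) ∧ (∑ j ∈ L, Q j) ≠ Q (m+10)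
      by_cases hn : m+8 ∈ L
      · have hsum : ∑ j ∈ L.erase (m+8), Q j + Q (m+8) = ∑ j ∈ L, Q j :=
          Finset.sum_erase_add L Q hn
        by_cases h2 : m+6 ∈ L
        · have h2' : m+6 ∈ L.erase (m+8) := Finset.mem_erase.2 ⟨by omega, h2⟩
          have hsum2 : ∑ j ∈ (L.erase (m+8)).erase (m+6), Q j + Q (m+6)
              = ∑ j ∈ L.erase (m+8), Q j := Finset.sum_erase_add _ Q h2'
          have hbb : ∀ j ∈ (L.erase (m+8)).erase (m+6), 1 ≤ j ∧ j ≤ m + 1 := by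
            intro j hj
            obtain ⟨hjL, hub⟩ := double_erase_bound hL hn h2 j hj
            have := hb j hjL
            exact ⟨this.1, hub this.2⟩
          have hleg : FQLegal ((L.erase (m+8)).erase (m+6)) :=
            legal_subset hL (fun x hx =>
              Finset.mem_of_mem_erase (Finset.mem_of_mem_erase hx))
          constructor
          · -- sum = Q(m+9) impossible by size: Q(m+8)+Q(m+6) > Q(m+9)? no:
            -- Q(m+9) = Q(m+7) + Q(m+6), Q(m+8) > Q(m+7)
            intro hS
            have e1 : Q (m+9) = Q (m+7) + Q (m+6) := Q5 (m+4)
            have e2 : Q (m+7) < Q (m+8) := Q_succ_lt (m+7)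
            omega
          · -- sum = Q(m+10) = Q(m+8) + Q(m+7) forces S'' = Q(m+7)-Q(m+6) = Q(m+2)
            intro hS
            have e1 : Q (m+10) = Q (m+8) + Q (m+7) := Q5 (m+5)
            have e2 : Q (m+7) = Q (m+6) + Q (m+2) := Q4 m
            have hS'' : (∑ j ∈ (L.erase (m+8)).erase (m+6), Q j) = Q (m+2) := by
              omega
            exact (ih (m+1) (by omega) _ hleg hbb).1 hS''
        · have hbb : ∀ j ∈ L.erase (m+8), 1 ≤ j ∧ j ≤ m + 3 := by
            intro j hj
            obtain ⟨hjL, hub⟩ := single_erase_bound hL hn h2 j hj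
            have := hb j hjL
            exact ⟨this.1, hub this.2⟩
          have hleg : FQLegal (L.erase (m+8)) :=
            legal_subset hL (Finset.erase_subset _ _)
          constructor
          · -- sum = Q(m+9) = Q(m+8)+Q(m+4) forces S' = Q(m+4)
            intro hS
            have e1 : Q (m+9) = Q (m+8) + Q (m+4) := Q4 (m+2)
            have hS' : (∑ j ∈ L.erase (m+8), Q j) = Q (m+4) := by omega
            exact (ih (m+3) (by omega) _ hleg hbb).1 hS'
          · -- sum = Q(m+10) = Q(m+8)+Q(m+7) forces S' = Q(m+7), but Msize: < Q(m+6)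
            intro hS
            have e1 : Q (m+10) = Q (m+8) + Q (m+7) := Q5 (m+5)
            have hM : (∑ j ∈ L.erase (m+8), Q j) < Q (m+6) :=
              Msize (m+3) _ hleg hbb
            have : Q (m+6) ≤ Q (m+7) := Q_mono (by omega)
            omega
      · have hbb : ∀ j ∈ L, 1 ≤ j ∧ j ≤ m + 7 := by
          intro j hj
          have h1 := hb j hj
          have : j ≠ m+8 := fun h => hn (h ▸ hj)
          omega
        constructor
        · -- Q(m+9) = Q((m+7)+2): by ih (m+7).2
          exact (ih (m+7) (by omega) L hL hbb).2
        · -- Q(m+10) = Q((m+7)+3): by Msize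
          intro hS
          have hM : (∑ j ∈ L, Q j) < Q (m+10) := Msize (m+7) L hL hbb
          omega

/-- decidable bounded version of representability, for the explicit Q -/
def ReprB (k m : ℕ) : Prop :=
  ∃ L ∈ (Finset.Icc 1 k).powerset, FQLegal L ∧ (∑ j ∈ L, Q j) = m

instance : ∀ k m, Decidable (ReprB k m) := fun k m => by unfold ReprB; infer_instance

lemma FQRepr_mono {q : ℕ → ℕ} {i i' m : ℕ} (h : i ≤ i') (hr : FQRepr q i m) :
    FQRepr q i' m := by
  obtain ⟨L, hb, hleg, hs⟩ := hr
  exact ⟨L, fun j hj => ⟨(hb j hj).1, lt_of_lt_of_le (hb j hj).2 h⟩, hleg, hs⟩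

lemma repr_iff {q : ℕ → ℕ} {i : ℕ} (hi : 1 ≤ i)
    (hqQ : ∀ j, 1 ≤ j → j < i → q j = Q j) (m : ℕ) :
    FQRepr q i m ↔ ReprB (i-1) m := by
  constructor
  · rintro ⟨L, hb, hleg, hs⟩
    refine ⟨L, Finset.mem_powerset.2 (fun x hx => Finset.mem_Icc.2
      ⟨(hb x hx).1, by have := (hb x hx).2; omega⟩), hleg, ?_⟩
    rw [← hs]
    exact Finset.sum_congr rfl (fun x hx => (hqQ x (hb x hx).1 (hb x hx).2).symm)
  · rintro ⟨L, hpow, hleg, hs⟩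
    have hb : ∀ j ∈ L, 1 ≤ j ∧ j < i := by
      intro j hj
      have := Finset.mem_Icc.1 (Finset.mem_powerset.1 hpow hj)
      omega
    refine ⟨L, hb, hleg, ?_⟩
    rw [← hs]
    exact Finset.sum_congr rfl (fun x hx => hqQ x (hb x hx).1 (hb x hx).2)

lemma qEqQ {q : ℕ → ℕ} (hq : IsFQSeq q) : ∀ n, 1 ≤ n → q n = Q n := by
  intro n
  induction n using Nat.strong_induction_on with
  | _ n ih =>
    intro hn1
    -- helper: previous values agree
    have hqQ : ∀ j, 1 ≤ j → j < n → q j = Q j := fun j h1 h2 => ih j h2 h1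
    match n, hn1 with
    | 1, _ => exact hq.1
    | (k+2), _ =>
      have hge2 : 2 ≤ k + 2 := by omega
      have hL := hq.2 (k+2) hge2
      have hriff := repr_iff (by omega : 1 ≤ k+2) hqQ
      have hk1 : k + 2 - 1 = k + 1 := by omega
      -- we show IsLeast of the same set at Q (k+2)
      have hIsQ : IsLeast {m : ℕ | 0 < m ∧ ¬ FQRepr q (k+2) m} (Q (k+2)) := by
        constructor
        · refine ⟨Q_pos (by omega), ?_⟩
          rw [hriff, hk1]
          -- ¬ ReprB (k+1) (Q (k+2))
          rintro ⟨L, hpow, hleg, hs⟩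
          have hb : ∀ j ∈ L, 1 ≤ j ∧ j ≤ k+1 := by
            intro j hj
            exact Finset.mem_Icc.1 (Finset.mem_powerset.1 hpow hj)
          exact (keyP (k+1) L hleg hb).1 hs
        · -- lower bound
          intro m hm
          obtain ⟨hm0, hmr⟩ := hm
          by_contra hlt
          push_neg at hlt
          apply hmr
          rw [hriff, hk1]
          -- need : ReprB (k+1) m for all 0 < m < Q (k+2)
          -- split on k small or use structure
          clear hmr hriff hL
          match k with
          | 0 => exact (by decide : ∀ m' ∈ Finset.Ico 1 (Q (0+2)), ReprB (0+1) m') m (Finset.mem_Ico.2 ⟨hm0, hlt⟩)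
          | 1 => exact (by decide : ∀ m' ∈ Finset.Ico 1 (Q (1+2)), ReprB (1+1) m') m (Finset.mem_Ico.2 ⟨hm0, hlt⟩)
          | 2 => exact (by decide : ∀ m' ∈ Finset.Ico 1 (Q (2+2)), ReprB (2+1) m') m (Finset.mem_Ico.2 ⟨hm0, hlt⟩)
          | 3 => exact (by decide : ∀ m' ∈ Finset.Ico 1 (Q (3+2)), ReprB (3+1) m') m (Finset.mem_Ico.2 ⟨hm0, hlt⟩)
          | 4 => exact (by decide : ∀ m' ∈ Finset.Ico 1 (Q (4+2)), ReprB (4+1) m') m (Finset.mem_Ico.2 ⟨hm0, hlt⟩)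
          | (t+5) =>
            -- n = t+7, Q n = Q (t+6) + Q (t+2)
            have hQn : Q (t+7) = Q (t+6) + Q (t+2) := Q4 t
            have hlt' : m < Q (t+7) := hlt
            show ReprB (t+6) m
            rcases Nat.lt_or_ge m (Q (t+6)) with hcase | hcase
            · -- m < Q (t+6) = q (t+6) : representable at stage t+6
              have hL6 := hq.2 (t+6) (by omega)
              have : FQRepr q (t+6) m := by
                by_contra hno
                have := hL6.2 ⟨hm0, hno⟩
                have := hqQ (t+6) (by omega) (by omega)
                omega
              have := FQRepr_mono (by omega : t+6 ≤ t+7) this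
              rwa [repr_iff (by omega) hqQ, (by omega : t+7-1 = t+6)] at this
            · rcases Nat.eq_or_lt_of_le hcase with hcase2 | hcase2
              · -- m = Q (t+6): singleton {t+6}
                refine ⟨{t+6}, ?_, ?_, ?_⟩
                · simp only [Finset.mem_powerset, Finset.singleton_subset_iff,
                    Finset.mem_Icc]
                  omega
                · constructor
                  · intro a ha b hb hab
                    simp only [Finset.mem_singleton] at ha hb
                    omega
                  · rintro ⟨h1, h3⟩
                    simp only [Finset.mem_singleton] at h1 h3
                    omega
                · rw [Finset.sum_singleton]
                  omega
              · -- Q(t+6) < m < Q(t+6)+Q(t+2): r = m - Q(t+6) ∈ (0, Q(t+2))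
                set r := m - Q (t+6) with hr
                have hr0 : 0 < r := by omega
                have hrlt : r < Q (t+2) := by omega
                have hL2 := hq.2 (t+2) (by omega)
                have hrep : FQRepr q (t+2) r := by
                  by_contra hno
                  have := hL2.2 ⟨hr0, hno⟩
                  have := hqQ (t+2) (by omega) (by omega)
                  omega
                obtain ⟨L', hb', hleg', hs'⟩ := hrep
                have hnotin : t+6 ∉ L' := fun h => by
                  have := hb' _ h
                  omega
                refine ⟨insert (t+6) L', ?_, ?_, ?_⟩
                · rw [Finset.mem_powerset]
                  intro x hx
                  rcases Finset.mem_insert.1 hx with h | h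
                  · simp [Finset.mem_Icc]; omega
                  · have := hb' x h
                    simp [Finset.mem_Icc]; omega
                · constructor
                  · intro a ha b hbm hab
                    rcases Finset.mem_insert.1 ha with ha' | ha' <;>
                      rcases Finset.mem_insert.1 hbm with hb2 | hb2
                    · omega
                    · have := hb' b hb2
                      omega
                    · have := hb' a ha'
                      omega
                    · exact hleg'.1 a ha' b hb2 hab
                  · rintro ⟨h1, h3⟩
                    rcases Finset.mem_insert.1 h1 with h | h
                    · omega
                    rcases Finset.mem_insert.1 h3 with h' | h'
                    · omega
                    exact hleg'.2 ⟨h, h'⟩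
                · rw [Finset.sum_insert hnotin]
                  have : ∑ j ∈ L', Q j = r := by
                    rw [← hs']
                    exact Finset.sum_congr rfl (fun x hx =>
                      (hqQ x (hb' x hx).1 (by have := (hb' x hx).2; omega)).symm)
                  rw [this]
                  omega
      exact hL.unique hIsQ

open Filter

lemma lam_bounds (lam1 : ℝ) (hroot : lam1 ^ 3 - lam1 - 1 = 0) :
    1.3 ≤ lam1 ∧ lam1 ≤ 1.4 := by
  constructor
  · by_contra h
    push_neg at h
    nlinarith [sq_nonneg (lam1 + 1), sq_nonneg lam1, sq_nonneg (lam1 - 1.3),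
      sq_nonneg (lam1 + 0.6)]
  · by_contra h
    push_neg at h
    nlinarith [sq_nonneg lam1, sq_nonneg (lam1 - 1.4)]

noncomputable def rQ (lam1 : ℝ) (n : ℕ) : ℝ := (Q n : ℝ) / lam1 ^ n

set_option maxHeartbeats 1000000 in
lemma analytic (lam1 : ℝ) (h1 : 1.3 ≤ lam1) (h2 : lam1 ≤ 1.4)
    (hcube : lam1 ^ 3 = lam1 + 1) :
    ∃ α1 : ℝ, 0 < α1 ∧
      Tendsto (fun n : ℕ => (Q n : ℝ) / lam1 ^ n) atTop (nhds α1) := by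
  have hpos : (0:ℝ) < lam1 := by linarith
  have hne : lam1 ≠ 0 := ne_of_gt hpos
  have hpow : ∀ n : ℕ, (0:ℝ) < lam1 ^ n := fun n => pow_pos hpos n
  have hrpos : ∀ n, 1 ≤ n → 0 < rQ lam1 n := by
    intro n hn
    have : (0:ℝ) < (Q n : ℝ) := by exact_mod_cast Q_pos hn
    exact div_pos this (hpow n)
  have hd : (0:ℝ) < 2 + 1 / lam1 ^ 3 := by positivity
  obtain ⟨α, hα⟩ : ∃ a : ℝ,
      a = (rQ lam1 4 + rQ lam1 3 + rQ lam1 2 / lam1 ^ 3) / (2 + 1 / lam1 ^ 3) :=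
    ⟨_, rfl⟩
  have hαpos : 0 < α := by
    rw [hα]
    apply div_pos _ hd
    have h4 := hrpos 4 (by norm_num)
    have h3 := hrpos 3 (by norm_num)
    have h2' := hrpos 2 (by norm_num)
    have : 0 < rQ lam1 2 / lam1 ^ 3 := div_pos h2' (hpow 3)
    linarith
  have hinv : 1 / lam1 ^ 2 + 1 / lam1 ^ 3 = 1 := by
    field_simp
    linear_combination (-1 : ℝ) * hcube
  have hαK : α * (2 + 1 / lam1 ^ 3)
      = rQ lam1 4 + rQ lam1 3 + rQ lam1 2 / lam1 ^ 3 := by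
    rw [hα, div_mul_cancel₀ _ (ne_of_gt hd)]
  -- recurrence for rQ
  have hrrec : ∀ m : ℕ,
      rQ lam1 (m+5) = rQ lam1 (m+3) / lam1 ^ 2 + rQ lam1 (m+2) / lam1 ^ 3 := by
    intro m
    have e3 : rQ lam1 (m+3) / lam1 ^ 2 = (Q (m+3) : ℝ) / lam1 ^ (m+5) := by
      show (Q (m+3) : ℝ) / lam1 ^ (m+3) / lam1 ^ 2 = _
      rw [div_div, ← pow_add, show m+3+2 = m+5 by omega]
    have e2 : rQ lam1 (m+2) / lam1 ^ 3 = (Q (m+2) : ℝ) / lam1 ^ (m+5) := by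
      show (Q (m+2) : ℝ) / lam1 ^ (m+2) / lam1 ^ 3 = _
      rw [div_div, ← pow_add, show m+2+3 = m+5 by omega]
    rw [e3, e2, ← add_div]
    show ((Q (m+5) : ℝ)) / lam1 ^ (m+5) = _
    rw [Q5]
    push_cast
    ring
  -- key relation
  have hkey : ∀ m : ℕ, (rQ lam1 (m+4) - α) + (rQ lam1 (m+3) - α)
      + (rQ lam1 (m+2) - α) / lam1 ^ 3 = 0 := by
    intro m
    induction m with
    | zero =>
      norm_num
      linear_combination (-1 : ℝ) * hαK
    | succ m ih =>
      have h5 := hrrec m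
      have hgoal : (rQ lam1 (m+5) - α) + (rQ lam1 (m+4) - α)
          + (rQ lam1 (m+3) - α) / lam1 ^ 3 = 0 := by
        rw [h5]
        linear_combination ih + rQ lam1 (m+3) * hinv
      rw [show m+1+4 = m+5 by omega, show m+1+3 = m+4 by omega,
        show m+1+2 = m+3 by omega]
      exact hgoal
  -- 4-step contraction
  have hstep : ∀ m : ℕ, rQ lam1 (m+6) - α
      = (2 * (1/lam1^3) - 1) * (rQ lam1 (m+3) - α)
        + ((1/lam1^3)^2 - 1/lam1^3) * (rQ lam1 (m+2) - α) := by
    intro m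
    have e0 := hkey m
    have e1 := hkey (m+1)
    have e2 := hkey (m+2)
    rw [show m+1+4 = m+5 by omega, show m+1+3 = m+4 by omega,
      show m+1+2 = m+3 by omega] at e1
    rw [show m+2+4 = m+6 by omega, show m+2+3 = m+5 by omega,
      show m+2+2 = m+4 by omega] at e2
    linear_combination e2 - e1 + (1 - 1/lam1^3) * e0
  -- numeric bounds on the coefficients
  have hc3 : 1/(2.4:ℝ) ≤ 1/lam1^3 := by
    rw [hcube]
    apply one_div_le_one_div_of_le <;> linarith
  have hc4 : 1/lam1^3 ≤ 1/(2.3:ℝ) := by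
    rw [hcube]
    apply one_div_le_one_div_of_le <;> linarith
  have hc1 : |2 * (1/lam1^3) - 1| ≤ 0.17 := by
    rw [abs_le]
    constructor <;> nlinarith
  have hc2 : |(1/lam1^3)^2 - 1/lam1^3| ≤ 0.25 := by
    rw [abs_le]
    constructor <;> nlinarith [sq_nonneg (1/lam1^3 - 1/2), sq_nonneg (1/lam1^3)]
  -- geometric decay
  obtain ⟨D, hD⟩ : ∃ d : ℝ, d = (|rQ lam1 2 - α| + |rQ lam1 3 - α|
      + |rQ lam1 4 - α| + |rQ lam1 5 - α| + 1) * 100 := ⟨_, rfl⟩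
  have hD0 : 0 < D := by
    rw [hD]
    positivity
  have hbase : ∀ j, 2 ≤ j → j ≤ 5 → |rQ lam1 j - α| ≤ D * (0.8:ℝ)^j := by
    have a2 := abs_nonneg (rQ lam1 2 - α)
    have a3 := abs_nonneg (rQ lam1 3 - α)
    have a4 := abs_nonneg (rQ lam1 4 - α)
    have a5 := abs_nonneg (rQ lam1 5 - α)
    intro j hj1 hj2
    have e2 : (0.8:ℝ)^2 = 0.64 := by norm_num
    have e3 : (0.8:ℝ)^3 = 0.512 := by norm_num
    have e4 : (0.8:ℝ)^4 = 0.4096 := by norm_num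
    have e5 : (0.8:ℝ)^5 = 0.32768 := by norm_num
    interval_cases j <;> rw [hD] <;> nlinarith
  have hgeo : ∀ n : ℕ, 2 ≤ n → |rQ lam1 n - α| ≤ D * (0.8:ℝ)^n := by
    intro n
    induction n using Nat.strong_induction_on with
    | _ n ih =>
      intro hn2
      rcases Nat.lt_or_ge n 6 with h6 | h6
      · exact hbase n hn2 (by omega)
      · obtain ⟨m, rfl⟩ : ∃ m, n = m + 6 := ⟨n - 6, by omega⟩
        have e := hstep m
        have b3 : |rQ lam1 (m+3) - α| ≤ D * (0.8:ℝ)^(m+3) :=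
          ih (m+3) (by omega) (by omega)
        have b2 : |rQ lam1 (m+2) - α| ≤ D * (0.8:ℝ)^(m+2) :=
          ih (m+2) (by omega) (by omega)
        have p3 : (0:ℝ) < (0.8:ℝ)^(m+3) := pow_pos (by norm_num) _
        have p2 : (0:ℝ) < (0.8:ℝ)^(m+2) := pow_pos (by norm_num) _
        have n3 := abs_nonneg (rQ lam1 (m+3) - α)
        have n2 := abs_nonneg (rQ lam1 (m+2) - α)
        have a1 := abs_nonneg (2 * (1/lam1^3) - 1)
        have a2' := abs_nonneg ((1/lam1^3)^2 - 1/lam1^3)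
        calc |rQ lam1 (m+6) - α|
            = |(2 * (1/lam1^3) - 1) * (rQ lam1 (m+3) - α)
              + ((1/lam1^3)^2 - 1/lam1^3) * (rQ lam1 (m+2) - α)| := by rw [e]
          _ ≤ |(2 * (1/lam1^3) - 1) * (rQ lam1 (m+3) - α)|
              + |((1/lam1^3)^2 - 1/lam1^3) * (rQ lam1 (m+2) - α)| := abs_add_le _ _
          _ = |2 * (1/lam1^3) - 1| * |rQ lam1 (m+3) - α|
              + |(1/lam1^3)^2 - 1/lam1^3| * |rQ lam1 (m+2) - α| := by
              rw [abs_mul, abs_mul]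
          _ ≤ 0.17 * (D * (0.8:ℝ)^(m+3)) + 0.25 * (D * (0.8:ℝ)^(m+2)) := by
              nlinarith
          _ ≤ D * (0.8:ℝ)^(m+6) := by
              have e3 : (0.8:ℝ)^(m+3) = (0.8:ℝ)^(m+2) * 0.8 := by
                rw [show m+3 = (m+2)+1 by omega, pow_succ]
              have e6 : (0.8:ℝ)^(m+6) = (0.8:ℝ)^(m+2) * (0.8:ℝ)^4 := by
                rw [show m+6 = (m+2)+4 by omega, pow_add]
              rw [e3, e6]
              nlinarith [mul_pos hD0 p2]
  -- conclude
  have hgeo0 : Tendsto (fun n : ℕ => D * (0.8:ℝ)^n) atTop (nhds 0) := by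
    have := tendsto_pow_atTop_nhds_zero_of_lt_one
      (show (0:ℝ) ≤ 0.8 by norm_num) (show (0.8:ℝ) < 1 by norm_num)
    simpa using this.const_mul D
  have hgeoneg : Tendsto (fun n : ℕ => -(D * (0.8:ℝ)^n)) atTop (nhds 0) := by
    simpa using hgeo0.neg
  have hs0 : Tendsto (fun n : ℕ => rQ lam1 n - α) atTop (nhds 0) := by
    apply tendsto_of_tendsto_of_tendsto_of_le_of_le' hgeoneg hgeo0
    · filter_upwards [eventually_ge_atTop 2] with n hn
      have h := abs_le.1 (hgeo n hn)
      linarith [h.1]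
    · filter_upwards [eventually_ge_atTop 2] with n hn
      exact (abs_le.1 (hgeo n hn)).2
  refine ⟨α, hαpos, ?_⟩
  have h := hs0.add_const α
  rw [zero_add] at h
  have : (fun n : ℕ => rQ lam1 n - α + α) = fun n : ℕ => (Q n : ℝ) / lam1 ^ n := by
    funext n
    simp [rQ]
  rwa [this] at h

theorem stmt_4 (q : ℕ → ℕ) (hq : IsFQSeq q) (lam1 : ℝ)
    (hroot : lam1 ^ 3 - lam1 - 1 = 0)
    (huniq : ∀ x : ℝ, x ^ 3 - x - 1 = 0 → x = lam1) :
    ∃ α1 : ℝ, 0 < α1 ∧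
      Filter.Tendsto (fun n : ℕ => (q n : ℝ) / lam1 ^ n) Filter.atTop (nhds α1) := by
  obtain ⟨h1, h2⟩ := lam_bounds lam1 hroot
  have hcube : lam1 ^ 3 = lam1 + 1 := by linarith
  obtain ⟨α1, hα1, ht⟩ := analytic lam1 h1 h2 hcube
  refine ⟨α1, hα1, ?_⟩
  apply ht.congr'
  filter_upwards [eventually_ge_atTop 1] with n hn
  rw [qEqQ hq n hn]
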